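/- Let {(A_i, B_i)}_{i=1}^m be pairs of finite sets with |A_i| = a and |B_i| = b for all i, such that A_i ∩ B_i = ∅ for all i and A_i ∩ B_j ≠ ∅ for all i ≠ j. Then m ≤ C(a+b, a). -/

import Mathlib

open Finset Equiv

variable {N a b : ℕ}

def hperm (c : Finset (Fin (a+b))) (hc : c.card = a) (hcc : cᶜ.card = b) :
    Equiv.Perm (Fin (a+b)) :=
  finSumFinEquiv.symm.trans <|
    (Equiv.sumCongr (c.orderIsoOfFin hc).toEquiv
      ((cᶜ.orderIsoOfFin hcc).toEquiv.trans
        (Equiv.subtypeEquivRight (fun _ => Finset.mem_compl)))).trans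
    (Equiv.sumCompl (· ∈ c))

lemma hperm_symm_mem (c : Finset (Fin (a+b))) (hc : c.card = a) (hcc : cᶜ.card = b)
    (k : Fin (a+b)) (hk : k ∈ c) : (((hperm c hc hcc).symm k) : Fin (a+b)).val < a := by
  simp only [hperm, Equiv.symm_trans_apply, Equiv.sumCompl_symm_apply_of_pos hk,
    Equiv.sumCongr_symm, Equiv.sumCongr_apply, Sum.map_inl, Equiv.symm_symm,
    finSumFinEquiv_apply_left, Fin.coe_castAdd]
  exact ((c.orderIsoOfFin hc).symm ⟨k, hk⟩).isLt

lemma hperm_symm_not_mem (c : Finset (Fin (a+b))) (hc : c.card = a) (hcc : cᶜ.card = b)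
    (k : Fin (a+b)) (hk : k ∉ c) : a ≤ (((hperm c hc hcc).symm k) : Fin (a+b)).val := by
  simp only [hperm, Equiv.symm_trans_apply, Equiv.sumCompl_symm_apply_of_neg hk,
    Equiv.sumCongr_symm, Equiv.sumCongr_apply, Sum.map_inr, Equiv.symm_symm,
    finSumFinEquiv_apply_right, Fin.coe_natAdd]
  exact Nat.le_add_right _ _

def psi (V : Finset (Fin N)) (hV : V.card = a + b) (c : Finset (Fin (a+b)))
    (hc : c.card = a) (hcc : cᶜ.card = b) : Equiv.Perm (Fin N) :=
  Equiv.Perm.extendDomain (hperm c hc hcc).symm (V.orderIsoOfFin hV).toEquiv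

lemma psi_apply (V : Finset (Fin N)) (hV : V.card = a + b) (c : Finset (Fin (a+b)))
    (hc : c.card = a) (hcc : cᶜ.card = b) (v : Fin N) (hv : v ∈ V) :
    psi V hV c hc hcc v =
      ↑(V.orderIsoOfFin hV ((hperm c hc hcc).symm ((V.orderIsoOfFin hV).symm ⟨v, hv⟩))) := by
  exact Equiv.Perm.extendDomain_apply_subtype _ _ hv

lemma psi_mem (V : Finset (Fin N)) (hV : V.card = a + b) (c : Finset (Fin (a+b)))
    (hc : c.card = a) (hcc : cᶜ.card = b) (v : Fin N) (hv : v ∈ V) :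
    psi V hV c hc hcc v ∈ V := by
  rw [psi_apply V hV c hc hcc v hv]
  exact Finset.coe_mem _

def psi' (V : Finset (Fin N)) (c : Finset (Fin (a+b))) : Equiv.Perm (Fin N) :=
  if h : V.card = a + b ∧ c.card = a ∧ cᶜ.card = b then psi V h.1 c h.2.1 h.2.2 else 1

lemma count_key {N a b : ℕ} (A B : Finset (Fin N)) (hA : A.card = a) (hB : B.card = b)
    (hd : Disjoint A B) :
    N.factorial ≤ (a + b).choose a *
      (Finset.univ.filter
        (fun σ : Equiv.Perm (Fin N) => ∀ x ∈ A, ∀ y ∈ B, σ x < σ y)).card := by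
  classical
  set S := Finset.univ.filter
      (fun σ : Equiv.Perm (Fin N) => ∀ x ∈ A, ∀ y ∈ B, σ x < σ y) with hSdef
  have hABcard : (A ∪ B).card = a + b := by
    rw [Finset.card_union_of_disjoint hd, hA, hB]
  have hVcard : ∀ σ : Equiv.Perm (Fin N), (Finset.image (⇑σ) (A ∪ B)).card = a + b := fun σ => by
    rw [Finset.card_image_of_injective _ σ.injective, hABcard]
  set g : ∀ σ : Equiv.Perm (Fin N), Fin (a+b) ≃o (Finset.image (⇑σ) (A ∪ B) : Finset (Fin N)) :=
    fun σ => (Finset.image (⇑σ) (A ∪ B)).orderIsoOfFin (hVcard σ) with hgdef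
  set c : Equiv.Perm (Fin N) → Finset (Fin (a+b)) :=
    fun σ => Finset.univ.filter (fun k => ((g σ k : Fin N) ∈ Finset.image (⇑σ) A)) with hcdef
  have hmemc : ∀ σ k, k ∈ c σ ↔ (g σ k : Fin N) ∈ Finset.image (⇑σ) A := by
    intro σ k; simp [hcdef]
  have hccard : ∀ σ : Equiv.Perm (Fin N), (c σ).card = a := by
    intro σ
    have heq : (c σ).card = (Finset.image (⇑σ) A).card := by
      apply Finset.card_nbij (i := fun k => (g σ k : Fin N))
      · intro k hk; exact (hmemc σ k).1 hk
      · intro k1 h1 k2 h2 h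
        exact (g σ).injective (Subtype.ext h)
      · intro v hv
        have hv' : v ∈ Finset.image (⇑σ) (A ∪ B) :=
          Finset.image_subset_image Finset.subset_union_left hv
        refine ⟨(g σ).symm ⟨v, hv'⟩, ?_, ?_⟩
        · have hgg : (g σ ((g σ).symm ⟨v, hv'⟩) : Fin N) = v := by simp
          simp only [Finset.coe_filter, Set.mem_setOf_eq, hcdef]
          exact ⟨Finset.mem_univ _, by rw [hgg]; exact hv⟩
        · simp
    rw [heq, Finset.card_image_of_injective A σ.injective, hA]
  have hcccard : ∀ σ : Equiv.Perm (Fin N), ((c σ)ᶜ).card = b := by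
    intro σ
    rw [Finset.card_compl, hccard]
    simp
  have hpsieq : ∀ σ : Equiv.Perm (Fin N), psi' (Finset.image (⇑σ) (A ∪ B)) (c σ)
      = psi (Finset.image (⇑σ) (A ∪ B)) (hVcard σ) (c σ) (hccard σ) (hcccard σ) := fun σ =>
    dif_pos ⟨hVcard σ, hccard σ, hcccard σ⟩
  -- images stay in V
  have himgsub : ∀ σ : Equiv.Perm (Fin N), ∀ v ∈ Finset.image (⇑σ) (A ∪ B),
      psi' (Finset.image (⇑σ) (A ∪ B)) (c σ) v ∈ Finset.image (⇑σ) (A ∪ B) := by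
    intro σ v hv
    rw [hpsieq σ]
    exact psi_mem _ _ _ _ _ v hv
  have himg : ∀ σ : Equiv.Perm (Fin N),
      (A ∪ B).image (⇑(psi' (Finset.image (⇑σ) (A ∪ B)) (c σ) * σ))
        = Finset.image (⇑σ) (A ∪ B) := by
    intro σ
    have h1 : (A ∪ B).image (⇑(psi' (Finset.image (⇑σ) (A ∪ B)) (c σ) * σ))
        = (Finset.image (⇑σ) (A ∪ B)).image (psi' (Finset.image (⇑σ) (A ∪ B)) (c σ)) := by
      rw [Finset.image_image]; rfl
    rw [h1]
    apply Finset.eq_of_subset_of_card_le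
    · intro v hv
      rw [Finset.mem_image] at hv
      obtain ⟨w, hw, rfl⟩ := hv
      exact himgsub σ w hw
    · rw [Finset.card_image_of_injective _ (psi' _ _).injective]
  -- the sorted permutation is in S
  have hsorted : ∀ σ : Equiv.Perm (Fin N), (psi' (Finset.image (⇑σ) (A ∪ B)) (c σ) * σ) ∈ S := by
    intro σ
    rw [hSdef, Finset.mem_filter]
    refine ⟨Finset.mem_univ _, ?_⟩
    intro x hx y hy
    have hxV : σ x ∈ Finset.image (⇑σ) (A ∪ B) :=
      Finset.mem_image_of_mem σ (Finset.mem_union_left _ hx)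
    have hyV : σ y ∈ Finset.image (⇑σ) (A ∪ B) :=
      Finset.mem_image_of_mem σ (Finset.mem_union_right _ hy)
    have hx' : (psi' (Finset.image (⇑σ) (A ∪ B)) (c σ) * σ) x
        = ↑(g σ ((hperm (c σ) (hccard σ) (hcccard σ)).symm ((g σ).symm ⟨σ x, hxV⟩))) := by
      rw [Equiv.Perm.mul_apply, hpsieq σ]
      exact psi_apply _ _ _ _ _ _ hxV
    have hy' : (psi' (Finset.image (⇑σ) (A ∪ B)) (c σ) * σ) y
        = ↑(g σ ((hperm (c σ) (hccard σ) (hcccard σ)).symm ((g σ).symm ⟨σ y, hyV⟩))) := by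
      rw [Equiv.Perm.mul_apply, hpsieq σ]
      exact psi_apply _ _ _ _ _ _ hyV
    rw [hx', hy']
    have hkx : (g σ).symm ⟨σ x, hxV⟩ ∈ c σ := by
      rw [hmemc]
      have : (g σ ((g σ).symm ⟨σ x, hxV⟩) : Fin N) = σ x := by simp
      rw [this]
      exact Finset.mem_image_of_mem σ hx
    have hky : (g σ).symm ⟨σ y, hyV⟩ ∉ c σ := by
      rw [hmemc]
      have : (g σ ((g σ).symm ⟨σ y, hyV⟩) : Fin N) = σ y := by simp
      rw [this]
      intro hmem
      rw [Finset.mem_image] at hmem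
      obtain ⟨x', hx', hxx⟩ := hmem
      have : x' = y := σ.injective hxx
      subst this
      exact (Finset.disjoint_left.1 hd hx') hy
    have hlt : (hperm (c σ) (hccard σ) (hcccard σ)).symm ((g σ).symm ⟨σ x, hxV⟩)
        < (hperm (c σ) (hccard σ) (hcccard σ)).symm ((g σ).symm ⟨σ y, hyV⟩) := by
      rw [Fin.lt_def]
      exact lt_of_lt_of_le (hperm_symm_mem _ _ _ _ hkx) (hperm_symm_not_mem _ _ _ _ hky)
    exact_mod_cast (g σ).lt_iff_lt.2 hlt
  -- the injection
  have hinj : Set.InjOn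
      (fun σ : Equiv.Perm (Fin N) => (c σ, psi' (Finset.image (⇑σ) (A ∪ B)) (c σ) * σ))
      (Finset.univ : Finset (Equiv.Perm (Fin N))) := by
    intro σ1 _ σ2 _ h
    simp only [Prod.mk.injEq] at h
    obtain ⟨hc12, hτ⟩ := h
    have hV12 : Finset.image (⇑σ1) (A ∪ B) = Finset.image (⇑σ2) (A ∪ B) := by
      rw [← himg σ1, ← himg σ2, hτ]
    rw [hV12, hc12] at hτ
    exact mul_left_cancel hτ
  have hmaps : ∀ σ ∈ (Finset.univ : Finset (Equiv.Perm (Fin N))),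
      (c σ, psi' (Finset.image (⇑σ) (A ∪ B)) (c σ) * σ)
        ∈ (Finset.univ.powersetCard a ×ˢ S :
            Finset (Finset (Fin (a+b)) × Equiv.Perm (Fin N))) := by
    intro σ _
    rw [Finset.mem_product]
    exact ⟨Finset.mem_powersetCard.2 ⟨Finset.subset_univ _, hccard σ⟩, hsorted σ⟩
  have hle := Finset.card_le_card_of_injOn _ hmaps hinj
  rw [Finset.card_univ, Fintype.card_perm, Fintype.card_fin] at hle
  rw [Finset.card_product, Finset.card_powersetCard, Finset.card_univ, Fintype.card_fin] at hle
  exact hle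

theorem bollobas_uniform {α : Type*} [DecidableEq α] (m a b : ℕ) (A B : Fin m → Finset α)
    (hA : ∀ i, (A i).card = a) (hB : ∀ i, (B i).card = b)
    (hdisj : ∀ i, A i ∩ B i = ∅)
    (hcross : ∀ i j, i ≠ j → (A i ∩ B j).Nonempty) :
    m ≤ Nat.choose (a + b) a := by
  classical
  rcases le_or_gt m 1 with hm | hm
  · exact hm.trans (Nat.one_le_iff_ne_zero.2 (Nat.choose_pos (Nat.le_add_right a b)).ne')
  -- now 2 ≤ m
  have h01 : (⟨0, by omega⟩ : Fin m) ≠ ⟨1, by omega⟩ := by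
    simp [Fin.ext_iff]
  obtain ⟨x0, hx0⟩ := hcross _ _ h01
  set U : Finset α := Finset.univ.biUnion (fun i => A i ∪ B i) with hUdef
  have hAU : ∀ i, A i ⊆ U := fun i x hx =>
    Finset.mem_biUnion.2 ⟨i, Finset.mem_univ _, Finset.mem_union_left _ hx⟩
  have hBU : ∀ i, B i ⊆ U := fun i x hx =>
    Finset.mem_biUnion.2 ⟨i, Finset.mem_univ _, Finset.mem_union_right _ hx⟩
  have hx0U : x0 ∈ U := hAU _ (Finset.mem_inter.1 hx0).1
  set n := U.card with hn
  have e : {x // x ∈ U} ≃ Fin n := Fintype.equivFinOfCardEq (by rw [Fintype.card_coe])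
  set φ : α → Fin n := fun x => if h : x ∈ U then e ⟨x, h⟩ else e ⟨x0, hx0U⟩ with hφdef
  have hφinj : ∀ x ∈ U, ∀ y ∈ U, φ x = φ y → x = y := by
    intro x hx y hy hxy
    rw [hφdef] at hxy
    simp only [dif_pos hx, dif_pos hy] at hxy
    exact Subtype.ext_iff.1 (e.injective hxy)
  set A' : Fin m → Finset (Fin n) := fun i => (A i).image φ with hA'def
  set B' : Fin m → Finset (Fin n) := fun i => (B i).image φ with hB'def
  have hA' : ∀ i, (A' i).card = a := by
    intro i
    rw [hA'def]
    rw [Finset.card_image_of_injOn (fun x hx y hy => hφinj x (hAU i hx) y (hAU i hy))]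
    exact hA i
  have hB' : ∀ i, (B' i).card = b := by
    intro i
    rw [hB'def]
    rw [Finset.card_image_of_injOn (fun x hx y hy => hφinj x (hBU i hx) y (hBU i hy))]
    exact hB i
  have hd' : ∀ i, Disjoint (A' i) (B' i) := by
    intro i
    rw [Finset.disjoint_left]
    intro v hvA hvB
    rw [hA'def, Finset.mem_image] at hvA
    rw [hB'def, Finset.mem_image] at hvB
    obtain ⟨x, hx, rfl⟩ := hvA
    obtain ⟨y, hy, hyx⟩ := hvB
    have : y = x := hφinj y (hBU i hy) x (hAU i hx) hyx
    subst this
    have : y ∈ A i ∩ B i := Finset.mem_inter.2 ⟨hx, hy⟩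
    rw [hdisj i] at this
    exact absurd this (Finset.notMem_empty _)
  set S : Fin m → Finset (Equiv.Perm (Fin n)) := fun i =>
    Finset.univ.filter (fun σ : Equiv.Perm (Fin n) => ∀ x ∈ A' i, ∀ y ∈ B' i, σ x < σ y)
    with hSdef
  have hkey : ∀ i, n.factorial ≤ (a + b).choose a * (S i).card := fun i =>
    count_key (A' i) (B' i) (hA' i) (hB' i) (hd' i)
  have hSdisj : ∀ i ∈ (Finset.univ : Finset (Fin m)), ∀ j ∈ Finset.univ, i ≠ j →
      Disjoint (S i) (S j) := by
    intro i _ j _ hij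
    rw [Finset.disjoint_left]
    intro σ hσi hσj
    rw [hSdef, Finset.mem_filter] at hσi hσj
    obtain ⟨x, hx⟩ := hcross i j hij
    obtain ⟨y, hy⟩ := hcross j i hij.symm
    rw [Finset.mem_inter] at hx hy
    have h1 : σ (φ x) < σ (φ y) :=
      hσi.2 (φ x) (Finset.mem_image_of_mem φ hx.1) (φ y) (Finset.mem_image_of_mem φ hy.2)
    have h2 : σ (φ y) < σ (φ x) :=
      hσj.2 (φ y) (Finset.mem_image_of_mem φ hy.1) (φ x) (Finset.mem_image_of_mem φ hx.2)
    exact absurd h1 (not_lt.2 h2.le)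
  have hsum : ∑ i : Fin m, (S i).card ≤ n.factorial := by
    rw [← Finset.card_biUnion hSdisj]
    calc (Finset.univ.biUnion S).card ≤ (Finset.univ : Finset (Equiv.Perm (Fin n))).card :=
          Finset.card_le_card (Finset.subset_univ _)
      _ = n.factorial := by rw [Finset.card_univ, Fintype.card_perm, Fintype.card_fin]
  have hmain : m * n.factorial ≤ (a + b).choose a * n.factorial := by
    calc m * n.factorial = ∑ _i : Fin m, n.factorial := by
          rw [Finset.sum_const, Finset.card_univ, Fintype.card_fin, smul_eq_mul]
      _ ≤ ∑ i : Fin m, (a + b).choose a * (S i).card := Finset.sum_le_sum (fun i _ => hkey i)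
      _ = (a + b).choose a * ∑ i : Fin m, (S i).card := by rw [Finset.mul_sum]
      _ ≤ (a + b).choose a * n.factorial := Nat.mul_le_mul_left _ hsum
  exact Nat.le_of_mul_le_mul_right hmain (Nat.factorial_pos n)
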